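/- Let p ≥ 1 and let X : ℝ → ℝ belong to L^p on a neighborhood of 0, be self-similar at 0 with scaling ratio a > 1 and exponent α ∈ ℝ (i.e., a^α X(x) = X(ax) for almost every x), and suppose X does not coincide almost everywhere with a polynomial on any neighborhood of 0. Then α > -1/p, and the p-exponent of X at 0 equals α. -/

import Mathlib

open MeasureTheory

/-- `X ∈ T^p_α(x0)` in dimension 1. -/
def TpAt1 (p : ℝ) (X : ℝ → ℝ) (x0 α : ℝ) : Prop :=
  ∃ C : ℝ, 0 < C ∧ ∃ P : Polynomial ℝ,
    (P = 0 ∨ (P.natDegree : ℝ) < α) ∧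
    ∃ a0 : ℝ, 0 < a0 ∧ ∀ a : ℝ, 0 < a → a < a0 →
      ((1 / (2 * a)) * ∫ u in Set.Ioo (x0 - a) (x0 + a), |X u - P.eval u| ^ p) ^ (1 / p)
        ≤ C * a ^ α

/-- The `p`-exponent of `X` at `x0`. -/
noncomputable def pExponent1 (p : ℝ) (X : ℝ → ℝ) (x0 : ℝ) : EReal :=
  sSup (Real.toEReal '' {α : ℝ | TpAt1 p X x0 α})

section Stmt13Aux
open MeasureTheory Set Filter
namespace Stmt13


/-- Power mean inequality for reals. -/
lemma add_rpow_le {p : ℝ} (hp : 1 ≤ p) {x y : ℝ} (hx : 0 ≤ x) (hy : 0 ≤ y) :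
    (x + y) ^ p ≤ 2 ^ (p - 1) * (x ^ p + y ^ p) := by
  have h := NNReal.rpow_add_le_mul_rpow_add_rpow x.toNNReal y.toNNReal hp
  have h2 := NNReal.coe_le_coe.2 h
  push_cast [NNReal.coe_rpow] at h2
  rw [Real.coe_toNNReal x hx, Real.coe_toNNReal y hy] at h2
  simpa using h2

lemma intOn {p r0 : ℝ} {X : ℝ → ℝ} (hp : 0 < p)
    (hX : MemLp X (ENNReal.ofReal p) (volume.restrict (Ioo (-r0) r0)))
    {r : ℝ} (hr : r ≤ r0) : IntegrableOn (fun u => |X u| ^ p) (Ioo (-r) r) := by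
  have h0 : IntegrableOn (fun u => |X u| ^ p) (Ioo (-r0) r0) := by
    have := hX.integrable_norm_rpow (by simpa using hp.not_ge) ENNReal.ofReal_ne_top
    simpa [IntegrableOn, Real.norm_eq_abs, ENNReal.toReal_ofReal hp.le] using this
  exact h0.mono_set (Ioo_subset_Ioo (neg_le_neg hr) hr)

lemma scale_step {p a α r : ℝ} {X : ℝ → ℝ} (ha : 1 < a) (hr : 0 < r)
    (hss : ∀ᵐ x : ℝ, a ^ α * X x = X (a * x)) :
    ∫ u in Ioo (-r) r, |X u| ^ p
      = a ^ (1 + α * p) * ∫ u in Ioo (-(r/a)) (r/a), |X u| ^ p := by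
  have ha0 : (0:ℝ) < a := lt_trans one_pos ha
  have hra : 0 < r / a := div_pos hr ha0
  have key : ∫ u in Ioo (-r) r, |X u| ^ p
      = a * ∫ x in Ioo (-(r/a)) (r/a), |X (a * x)| ^ p := by
    have h1 : (∫ x in (-(r/a))..(r/a), |X (a * x)| ^ p)
        = a⁻¹ • ∫ x in (a * -(r/a))..(a * (r/a)), |X x| ^ p :=
      intervalIntegral.integral_comp_mul_left (fun u => |X u| ^ p) (ne_of_gt ha0)
    have e1 : a * (r / a) = r := mul_div_cancel₀ r (ne_of_gt ha0)
    have e2 : a * -(r / a) = -r := by rw [mul_neg, e1]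
    rw [e1, e2] at h1
    rw [intervalIntegral.integral_of_le (by linarith : -(r/a) ≤ r/a),
      integral_Ioc_eq_integral_Ioo] at h1
    rw [intervalIntegral.integral_of_le (by linarith : -r ≤ r),
      integral_Ioc_eq_integral_Ioo] at h1
    rw [h1, smul_eq_mul, ← mul_assoc, mul_inv_cancel₀ (ne_of_gt ha0), one_mul]
  rw [key]
  have congr1 : ∫ x in Ioo (-(r/a)) (r/a), |X (a * x)| ^ p
      = ∫ x in Ioo (-(r/a)) (r/a), a ^ (α * p) * |X x| ^ p := by
    apply setIntegral_congr_ae measurableSet_Ioo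
    filter_upwards [hss] with x hx _
    rw [← hx, abs_mul, abs_of_pos (Real.rpow_pos_of_pos ha0 α),
      Real.mul_rpow (Real.rpow_pos_of_pos ha0 α).le (abs_nonneg _),
      ← Real.rpow_mul ha0.le]
  rw [congr1, integral_const_mul, ← mul_assoc, Real.rpow_add ha0, Real.rpow_one]


variable {p a α r0 : ℝ} {X : ℝ → ℝ}

lemma scale_iter (ha : 1 < a) (hr0 : 0 < r0)
    (hss : ∀ᵐ x : ℝ, a ^ α * X x = X (a * x)) (n : ℕ) :
    ∫ u in Ioo (-r0) r0, |X u| ^ p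
      = ((a:ℝ) ^ n) ^ (1 + α * p) * ∫ u in Ioo (-(r0 / a ^ n)) (r0 / a ^ n), |X u| ^ p := by
  have ha0 : (0:ℝ) < a := lt_trans one_pos ha
  induction n with
  | zero => simp
  | succ n ih =>
    rw [ih, scale_step ha (by positivity : (0:ℝ) < r0 / a ^ n) (hss := hss) (p := p),
      ← mul_assoc, ← Real.mul_rpow (by positivity) ha0.le, ← pow_succ]
    have : r0 / a ^ n / a = r0 / a ^ (n + 1) := by
      rw [div_div, ← pow_succ]
    rw [this]

lemma Ig_pos (hp : 0 < p)
    (hX : MemLp X (ENNReal.ofReal p) (volume.restrict (Ioo (-r0) r0)))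
    (hpoly : ¬ ∃ (P : Polynomial ℝ) (δ : ℝ), 0 < δ ∧
      ∀ᵐ x : ℝ, |x| < δ → X x = P.eval x)
    {r : ℝ} (hr : 0 < r) (hrr0 : r ≤ r0) :
    0 < ∫ u in Ioo (-r) r, |X u| ^ p := by
  have hnn : (0:ℝ) ≤ ∫ u in Ioo (-r) r, |X u| ^ p :=
    integral_nonneg fun u => Real.rpow_nonneg (abs_nonneg _) p
  rcases hnn.lt_or_eq with h | h
  · exact h
  exfalso
  have hint : IntegrableOn (fun u => |X u| ^ p) (Ioo (-r) r) := by
    have h0 : IntegrableOn (fun u => |X u| ^ p) (Ioo (-r0) r0) := by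
      have := hX.integrable_norm_rpow (by simpa using hp.not_ge) ENNReal.ofReal_ne_top
      simpa [IntegrableOn, Real.norm_eq_abs, ENNReal.toReal_ofReal hp.le] using this
    exact h0.mono_set (Ioo_subset_Ioo (neg_le_neg hrr0) hrr0)
  have hz := (setIntegral_eq_zero_iff_of_nonneg_ae
      (ae_of_all _ fun u => Real.rpow_nonneg (abs_nonneg _) p) hint).1 h.symm
  have hz' : ∀ᵐ x : ℝ, x ∈ Ioo (-r) r → X x = 0 := by
    rw [← ae_restrict_iff' measurableSet_Ioo]
    filter_upwards [hz] with x hx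
    by_contra hne
    have : 0 < |X x| ^ p := Real.rpow_pos_of_pos (abs_pos.2 hne) p
    simp only [Pi.zero_apply] at hx
    exact this.ne' hx
  exact hpoly ⟨0, r, hr, by
    filter_upwards [hz'] with x hx habs
    simpa using hx (by constructor <;> [linarith [abs_lt.1 habs |>.1]; exact (abs_lt.1 habs).2])⟩

lemma Ig_tendsto_zero (hp : 0 < p) (ha : 1 < a) (hr0 : 0 < r0)
    (hX : MemLp X (ENNReal.ofReal p) (volume.restrict (Ioo (-r0) r0))) :
    Tendsto (fun n : ℕ => ∫ u in Ioo (-(r0 / a ^ n)) (r0 / a ^ n), |X u| ^ p)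
      atTop (nhds 0) := by
  have ha0 : (0:ℝ) < a := lt_trans one_pos ha
  have hanti : Antitone (fun n : ℕ => Ioo (-(r0 / a ^ n)) (r0 / a ^ n)) := by
    intro n m hnm
    have h1 : r0 / a ^ m ≤ r0 / a ^ n :=
      div_le_div_of_nonneg_left hr0.le (by positivity) (pow_le_pow_right₀ ha.le hnm)
    exact Ioo_subset_Ioo (neg_le_neg h1) h1
  have hfi : ∃ n : ℕ, IntegrableOn (fun u => |X u| ^ p)
      ((fun n : ℕ => Ioo (-(r0 / a ^ n)) (r0 / a ^ n)) n) := by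
    refine ⟨0, ?_⟩
    have h0 : IntegrableOn (fun u => |X u| ^ p) (Ioo (-r0) r0) := by
      have := hX.integrable_norm_rpow (by simpa using hp.not_ge) ENNReal.ofReal_ne_top
      simpa [IntegrableOn, Real.norm_eq_abs, ENNReal.toReal_ofReal hp.le] using this
    simpa using h0
  have := tendsto_setIntegral_of_antitone (μ := volume)
    (f := fun u => |X u| ^ p) (fun n : ℕ => measurableSet_Ioo) hanti hfi
  have hnull : volume (⋂ n : ℕ, Ioo (-(r0 / a ^ n)) (r0 / a ^ n)) = 0 := by
    refine measure_mono_null ?_ (measure_singleton (0:ℝ))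
    intro x hx
    simp only [mem_iInter, mem_Ioo] at hx
    have habs : ∀ n : ℕ, |x| < r0 / a ^ n := fun n => abs_lt.2 ⟨by linarith [(hx n).1], (hx n).2⟩
    have hlim : Tendsto (fun n : ℕ => r0 / a ^ n) atTop (nhds 0) := by
      simpa using tendsto_const_nhds.div_atTop (tendsto_pow_atTop_atTop_of_one_lt ha)
    have hle : |x| ≤ 0 := ge_of_tendsto hlim (Eventually.of_forall fun n => (habs n).le)
    have : x = 0 := abs_eq_zero.1 (le_antisymm hle (abs_nonneg x))
    simp [this]
  rwa [Measure.restrict_eq_zero.2 hnull, integral_zero_measure] at this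



lemma exp_pos (hp : 0 < p) (ha : 1 < a) (hr0 : 0 < r0)
    (hX : MemLp X (ENNReal.ofReal p) (volume.restrict (Ioo (-r0) r0)))
    (hss : ∀ᵐ x : ℝ, a ^ α * X x = X (a * x))
    (hpoly : ¬ ∃ (P : Polynomial ℝ) (δ : ℝ), 0 < δ ∧
      ∀ᵐ x : ℝ, |x| < δ → X x = P.eval x) :
    0 < 1 + α * p := by
  by_contra h
  push_neg at h
  have ha0 : (0:ℝ) < a := lt_trans one_pos ha
  have hI0 : 0 < ∫ u in Ioo (-r0) r0, |X u| ^ p := Ig_pos hp hX hpoly hr0 le_rfl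
  have hlow : ∀ n : ℕ, (∫ u in Ioo (-r0) r0, |X u| ^ p)
      ≤ ∫ u in Ioo (-(r0 / a ^ n)) (r0 / a ^ n), |X u| ^ p := by
    intro n
    have hsc := scale_iter ha hr0 hss (p := p) n
    have hfac : ((a:ℝ) ^ n) ^ (1 + α * p) ≤ 1 :=
      Real.rpow_le_one_of_one_le_of_nonpos (one_le_pow₀ ha.le) h
    have hnn : (0:ℝ) ≤ ∫ u in Ioo (-(r0 / a ^ n)) (r0 / a ^ n), |X u| ^ p :=
      integral_nonneg fun u => Real.rpow_nonneg (abs_nonneg _) p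
    calc (∫ u in Ioo (-r0) r0, |X u| ^ p)
        = ((a:ℝ) ^ n) ^ (1 + α * p) * ∫ u in Ioo (-(r0 / a ^ n)) (r0 / a ^ n), |X u| ^ p := hsc
      _ ≤ 1 * ∫ u in Ioo (-(r0 / a ^ n)) (r0 / a ^ n), |X u| ^ p := by
          exact mul_le_mul_of_nonneg_right hfac hnn
      _ = _ := one_mul _
  have htend := Ig_tendsto_zero hp ha hr0 hX
  have := ge_of_tendsto htend (Eventually.of_forall hlow)
  linarith

lemma exists_scale {r : ℝ} (ha : 1 < a) (hr0 : 0 < r0) (hr : 0 < r) (hrle : r ≤ r0) :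
    ∃ n : ℕ, r0 / a ^ (n + 1) < r ∧ r ≤ r0 / a ^ n := by
  have ha0 : (0:ℝ) < a := lt_trans one_pos ha
  have hex : ∃ n : ℕ, r0 / a ^ (n + 1) < r := by
    obtain ⟨n, hn⟩ := pow_unbounded_of_one_lt (r0 / r) ha
    refine ⟨n, ?_⟩
    rw [div_lt_iff₀ (by positivity)] at hn ⊢
    have h1 : (a:ℝ) ^ n ≤ a ^ (n + 1) := pow_le_pow_right₀ ha.le (Nat.le_succ n)
    nlinarith
  classical
  refine ⟨Nat.find hex, Nat.find_spec hex, ?_⟩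
  rcases Nat.eq_zero_or_eq_succ_pred (Nat.find hex) with h0 | hsucc
  · rw [h0]; simpa using hrle
  · have hmin := Nat.find_min hex (m := Nat.find hex - 1)
      (by omega : Nat.find hex - 1 < Nat.find hex)
    push_neg at hmin
    have : Nat.find hex - 1 + 1 = Nat.find hex := by omega
    rwa [this] at hmin

lemma Ig_bounds (hp : 0 < p) (ha : 1 < a) (hr0 : 0 < r0)
    (hX : MemLp X (ENNReal.ofReal p) (volume.restrict (Ioo (-r0) r0)))
    (hss : ∀ᵐ x : ℝ, a ^ α * X x = X (a * x))
    (hpoly : ¬ ∃ (P : Polynomial ℝ) (δ : ℝ), 0 < δ ∧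
      ∀ᵐ x : ℝ, |x| < δ → X x = P.eval x) :
    ∃ c1 c2 : ℝ, 0 < c1 ∧ 0 < c2 ∧ ∀ r : ℝ, 0 < r → r ≤ r0 →
      c1 * r ^ (1 + α * p) ≤ (∫ u in Ioo (-r) r, |X u| ^ p) ∧
      (∫ u in Ioo (-r) r, |X u| ^ p) ≤ c2 * r ^ (1 + α * p) := by
  have ha0 : (0:ℝ) < a := lt_trans one_pos ha
  set s := 1 + α * p with hs_def
  have hs : 0 < s := exp_pos hp ha hr0 hX hss hpoly
  set I0 := ∫ u in Ioo (-r0) r0, |X u| ^ p with hI0_def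
  have hI0 : 0 < I0 := Ig_pos hp hX hpoly hr0 le_rfl
  have hintOn : ∀ r : ℝ, r ≤ r0 → IntegrableOn (fun u => |X u| ^ p) (Ioo (-r) r) :=
    fun r hr => intOn hp hX hr
  refine ⟨I0 / (a * r0) ^ s, I0 * ((a / r0) ^ s), div_pos hI0 (by positivity),
    by positivity, fun r hr hrle => ?_⟩
  obtain ⟨n, hn1, hn2⟩ := exists_scale ha hr0 hr hrle
  have hIn : ∀ m : ℕ, (∫ u in Ioo (-(r0 / a ^ m)) (r0 / a ^ m), |X u| ^ p)
      = I0 / ((a:ℝ) ^ m) ^ s := by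
    intro m
    have := scale_iter ha hr0 hss (p := p) m
    rw [hI0_def, this, ← hs_def]
    field_simp
  constructor
  · -- lower bound
    have hsub : Ioo (-(r0 / a ^ (n+1))) (r0 / a ^ (n+1)) ⊆ Ioo (-r) r :=
      Ioo_subset_Ioo (neg_le_neg hn1.le) hn1.le
    have hmono : (∫ u in Ioo (-(r0 / a ^ (n+1))) (r0 / a ^ (n+1)), |X u| ^ p)
        ≤ ∫ u in Ioo (-r) r, |X u| ^ p :=
      setIntegral_mono_set (hintOn r hrle)
        (ae_of_all _ fun u => Real.rpow_nonneg (abs_nonneg _) p)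
        (HasSubset.Subset.eventuallyLE hsub)
    rw [hIn (n+1)] at hmono
    refine le_trans ?_ hmono
    -- I0 / (a*r0)^s * r^s ≤ I0 / (a^(n+1))^s
    have hle : (a:ℝ) ^ (n+1) ≤ a * r0 / r := by
      rw [le_div_iff₀ hr]
      have h2 : r * a ^ n ≤ r0 := (le_div_iff₀ (by positivity : (0:ℝ) < a ^ n)).1 hn2
      calc (a:ℝ) ^ (n+1) * r = a * (r * a ^ n) := by ring
        _ ≤ a * r0 := by nlinarith
    have hrp : ((a:ℝ) ^ (n+1) : ℝ) ^ s ≤ (a * r0 / r) ^ s :=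
      Real.rpow_le_rpow (by positivity) hle hs.le
    have h2 : I0 / (a * r0 / r) ^ s ≤ I0 / ((a:ℝ) ^ (n+1)) ^ s :=
      div_le_div_of_nonneg_left hI0.le (by positivity) hrp
    refine le_trans (le_of_eq ?_) h2
    rw [Real.div_rpow (by positivity) hr.le, Real.mul_rpow ha0.le hr0.le]
    have hr0s : (0:ℝ) < r0 ^ s := Real.rpow_pos_of_pos hr0 s
    have has : (0:ℝ) < a ^ s := Real.rpow_pos_of_pos ha0 s
    have hrs : (0:ℝ) < r ^ s := Real.rpow_pos_of_pos hr s
    field_simp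
  · -- upper bound
    have hsub : Ioo (-r) r ⊆ Ioo (-(r0 / a ^ n)) (r0 / a ^ n) :=
      Ioo_subset_Ioo (neg_le_neg hn2) hn2
    have hmono : (∫ u in Ioo (-r) r, |X u| ^ p)
        ≤ ∫ u in Ioo (-(r0 / a ^ n)) (r0 / a ^ n), |X u| ^ p :=
      setIntegral_mono_set (hintOn (r0 / a ^ n) (by
          rw [div_le_iff₀ (by positivity)]
          nlinarith [one_le_pow₀ (ha.le) (n := n)]))
        (ae_of_all _ fun u => Real.rpow_nonneg (abs_nonneg _) p)
        (HasSubset.Subset.eventuallyLE hsub)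
    rw [hIn n] at hmono
    refine le_trans hmono ?_
    have hgt : r0 / (a * r) ≤ (a:ℝ) ^ n := by
      rw [div_le_iff₀ (by positivity)]
      rw [div_lt_iff₀ (by positivity)] at hn1
      have hps : (a:ℝ) ^ (n+1) = a ^ n * a := pow_succ a n
      nlinarith
    have h3 : (r0 / (a * r)) ^ s ≤ ((a:ℝ) ^ n) ^ s :=
      Real.rpow_le_rpow (by positivity) hgt hs.le
    have h4 : I0 / ((a:ℝ) ^ n) ^ s ≤ I0 / (r0 / (a * r)) ^ s :=
      div_le_div_of_nonneg_left hI0.le (by positivity) h3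
    refine le_trans h4 (le_of_eq ?_)
    rw [Real.div_rpow hr0.le (by positivity), Real.div_rpow ha0.le hr0.le,
      Real.mul_rpow ha0.le hr.le]
    have hr0s : (0:ℝ) < r0 ^ s := Real.rpow_pos_of_pos hr0 s
    have has : (0:ℝ) < a ^ s := Real.rpow_pos_of_pos ha0 s
    have hrs : (0:ℝ) < r ^ s := Real.rpow_pos_of_pos hr s
    field_simp



lemma poly_memLp (q : ENNReal) (P : Polynomial ℝ) (r0 : ℝ) :
    MemLp (fun x => P.eval x) q (volume.restrict (Ioo (-r0) r0)) := by
  haveI : Fact (volume (Ioo (-r0) r0) < ⊤) := ⟨by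
    rw [Real.volume_Ioo]; exact ENNReal.ofReal_lt_top⟩
  obtain ⟨M, hM⟩ := (isCompact_Icc (a := -r0) (b := r0)).exists_bound_of_continuousOn
    ((P.continuous).continuousOn)
  apply MemLp.of_bound (P.continuous).aestronglyMeasurable M
  rw [ae_restrict_iff' measurableSet_Ioo]
  exact ae_of_all _ fun x hx => hM x (Ioo_subset_Icc_self hx)

/-- pointwise bound `|R.eval u| ≤ M * |u| ^ m` for `|u| ≤ 1`. -/
lemma poly_eval_le (R : Polynomial ℝ) {u : ℝ} (hu : |u| ≤ 1) :
    |R.eval u| ≤ (∑ i ∈ Finset.range (R.natDegree + 1), |R.coeff i|)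
      * |u| ^ R.natTrailingDegree := by
  set m := R.natTrailingDegree
  rw [Polynomial.eval_eq_sum_range, Finset.sum_mul]
  refine (Finset.abs_sum_le_sum_abs _ _).trans (Finset.sum_le_sum fun i hi => ?_)
  rw [abs_mul, abs_pow]
  rcases eq_or_ne (R.coeff i) 0 with h0 | h0
  · simp [h0]
  · have him : m ≤ i := Polynomial.natTrailingDegree_le_of_ne_zero h0
    exact mul_le_mul_of_nonneg_left
      (pow_le_pow_of_le_one (abs_nonneg u) hu him) (abs_nonneg _)

lemma poly_int_continuous (p : ℝ) (hp : 0 ≤ p) (R : Polynomial ℝ) (c d : ℝ) :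
    IntegrableOn (fun u => |R.eval u| ^ p) (Ioo c d) := by
  have hcont : Continuous fun u : ℝ => |R.eval u| ^ p :=
    (R.continuous.abs).rpow_const fun x => Or.inr hp
  exact (hcont.continuousOn.integrableOn_compact isCompact_Icc).mono_set Ioo_subset_Icc_self



lemma poly_upper (p : ℝ) (hp : 1 ≤ p) (R : Polynomial ℝ) :
    ∃ CR : ℝ, 0 ≤ CR ∧ ∀ r : ℝ, 0 < r → r ≤ 1 →
      (∫ u in Ioo (-r) r, |R.eval u| ^ p) ≤ CR * r ^ ((R.natTrailingDegree : ℝ) * p + 1) := by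
  have hp0 : (0:ℝ) < p := lt_of_lt_of_le one_pos hp
  set m := R.natTrailingDegree
  set M := ∑ i ∈ Finset.range (R.natDegree + 1), |R.coeff i| with hM_def
  have hM0 : 0 ≤ M := Finset.sum_nonneg fun i _ => abs_nonneg _
  refine ⟨2 * M ^ p, by positivity, fun r hr hr1 => ?_⟩
  have hbound : ∀ u ∈ Ioo (-r) r, |R.eval u| ^ p ≤ (M * r ^ m) ^ p := by
    intro u hu
    have huabs : |u| ≤ r := (abs_lt.2 ⟨hu.1, hu.2⟩).le
    have h1 : |R.eval u| ≤ M * r ^ m := by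
      refine (poly_eval_le R (le_trans huabs hr1)).trans ?_
      exact mul_le_mul_of_nonneg_left (pow_le_pow_left₀ (abs_nonneg u) huabs m) hM0
    exact Real.rpow_le_rpow (abs_nonneg _) h1 hp0.le
  have hint := poly_int_continuous p hp0.le R (-r) r
  have hconst : IntegrableOn (fun _ : ℝ => (M * r ^ m) ^ p) (Ioo (-r) r) := by
    exact integrableOn_const (by rw [Real.volume_Ioo]; exact ENNReal.ofReal_ne_top)
  have := setIntegral_mono_on hint hconst measurableSet_Ioo hbound
  refine this.trans ?_
  rw [setIntegral_const, Real.volume_real_Ioo_of_le (by linarith : -r ≤ r), smul_eq_mul]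
  have he : (M * r ^ m) ^ p = M ^ p * r ^ ((m:ℝ) * p) := by
    rw [Real.mul_rpow hM0 (by positivity), ← Real.rpow_natCast r m,
      ← Real.rpow_mul hr.le]
  rw [he]
  have he2 : r ^ ((m:ℝ) * p + 1) = r ^ ((m:ℝ) * p) * r := by
    rw [Real.rpow_add hr, Real.rpow_one]
  rw [he2]
  have h3 : r - -r = 2 * r := by ring
  rw [h3]
  ring_nf
  nlinarith [Real.rpow_nonneg (le_trans hM0 (le_refl M)) p,
    Real.rpow_pos_of_pos hr ((m:ℝ)*p), Real.rpow_nonneg hM0 p]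

lemma poly_lower (p : ℝ) (hp : 1 ≤ p) (R : Polynomial ℝ) (hR : R ≠ 0) :
    ∃ cR δ : ℝ, 0 < cR ∧ 0 < δ ∧ ∀ r : ℝ, 0 < r → r ≤ δ →
      cR * r ^ ((R.natTrailingDegree : ℝ) * p + 1) ≤ ∫ u in Ioo (-r) r, |R.eval u| ^ p := by
  have hp0 : (0:ℝ) < p := lt_of_lt_of_le one_pos hp
  set m := R.natTrailingDegree with hm_def
  have hdvd : (Polynomial.X : Polynomial ℝ) ^ m ∣ R :=
    Polynomial.X_pow_dvd_iff.2 fun d hd => Polynomial.coeff_eq_zero_of_lt_natTrailingDegree hd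
  obtain ⟨S, hRS⟩ := hdvd
  have hS0 : S.eval 0 ≠ 0 := by
    have h1 : R.coeff m = S.coeff 0 := by
      rw [hRS]
      simpa using Polynomial.coeff_X_pow_mul S m 0
    have h2 : R.coeff m ≠ 0 := by
      rw [hm_def]
      exact fun h => hR (Polynomial.trailingCoeff_eq_zero.1 h)
    rw [← Polynomial.coeff_zero_eq_eval_zero]
    rw [h1] at h2
    exact h2
  set ε := |S.eval 0| with hε_def
  have hε : 0 < ε := abs_pos.2 hS0
  -- continuity: get δ with |S.eval u| ≥ ε/2 for |u| < δ
  have hc : ContinuousAt (fun u => S.eval u) 0 := S.continuous.continuousAt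
  obtain ⟨δ, hδ, hδ2⟩ := Metric.continuousAt_iff.1 hc (ε/2) (by positivity)
  have hSbig : ∀ u : ℝ, |u| < δ → ε / 2 ≤ |S.eval u| := by
    intro u hu
    have := hδ2 (by simpa [Real.dist_eq] using hu)
    rw [Real.dist_eq] at this
    have h4 := abs_sub_abs_le_abs_sub (S.eval 0) (S.eval u)
    rw [abs_sub_comm] at h4
    rw [← hε_def] at h4
    linarith
  refine ⟨(ε/2) ^ p * (1/2 : ℝ) ^ ((m:ℝ) * p + 1), δ/2, by positivity, by positivity,
    fun r hr hrδ => ?_⟩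
  -- lower bound via Ioo (r/2) r
  have hsub : Ioo (r/2) r ⊆ Ioo (-r) r := Ioo_subset_Ioo (by linarith) le_rfl
  have hint := poly_int_continuous p hp0.le R (-r) r
  have hmono : (∫ u in Ioo (r/2) r, |R.eval u| ^ p) ≤ ∫ u in Ioo (-r) r, |R.eval u| ^ p :=
    setIntegral_mono_set hint (ae_of_all _ fun u => Real.rpow_nonneg (abs_nonneg _) p)
      (HasSubset.Subset.eventuallyLE hsub)
  refine le_trans ?_ hmono
  have hptwise : ∀ u ∈ Ioo (r/2) r, ((r/2) ^ m * (ε/2)) ^ p ≤ |R.eval u| ^ p := by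
    intro u hu
    have hu0 : 0 < u := lt_trans (by positivity) hu.1
    have huδ : |u| < δ := by
      rw [abs_of_pos hu0]
      linarith [hu.2]
    have hev : |R.eval u| = |u| ^ m * |S.eval u| := by
      rw [hRS]
      simp [abs_mul, abs_pow]
    have h5 : ((r/2) : ℝ) ^ m * (ε/2) ≤ |u| ^ m * |S.eval u| := by
      apply mul_le_mul
      · exact pow_le_pow_left₀ (by positivity) (by rw [abs_of_pos hu0]; linarith [hu.1]) m
      · exact hSbig u huδ
      · positivity
      · positivity
    rw [hev]
    exact Real.rpow_le_rpow (by positivity) h5 hp0.le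
  have hge := setIntegral_ge_of_const_le_real (μ := volume) measurableSet_Ioo
    (by rw [Real.volume_Ioo]; exact ENNReal.ofReal_ne_top)
    hptwise (hint.mono_set hsub)
  refine le_trans (le_of_eq ?_) hge
  rw [Real.volume_real_Ioo_of_le (by linarith : r/2 ≤ r)]
  have h6 : r - r / 2 = r / 2 := by ring
  rw [h6]
  have h7 : (((r/2):ℝ) ^ m * (ε/2)) ^ p = (ε/2) ^ p * (r/2) ^ ((m:ℝ) * p) := by
    rw [Real.mul_rpow (by positivity) (by positivity), ← Real.rpow_natCast (r/2) m,
      ← Real.rpow_mul (by positivity), mul_comm]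
  rw [h7]
  have h8 : ((r/2):ℝ) ^ ((m:ℝ) * p) * (r/2) = (r/2) ^ ((m:ℝ) * p + 1) := by
    rw [Real.rpow_add (by positivity), Real.rpow_one]
  have h9 : ((r/2):ℝ) ^ ((m:ℝ) * p + 1) = r ^ ((m:ℝ)*p+1) * (1/2) ^ ((m:ℝ)*p+1) := by
    rw [div_eq_mul_inv, Real.mul_rpow hr.le (by positivity)]
    norm_num
  conv_rhs => rw [mul_assoc, h8, h9]
  ring



lemma no_gap {A B t s δ : ℝ} (hA : 0 < A) (hB : 0 ≤ B) (hts : t < s) (hδ : 0 < δ)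
    (h : ∀ r : ℝ, 0 < r → r ≤ δ → A * r ^ t ≤ B * r ^ s) : False := by
  rcases hB.eq_or_lt with hB0 | hB0
  · have h1 := h δ hδ le_rfl
    rw [← hB0, zero_mul] at h1
    nlinarith [Real.rpow_pos_of_pos hδ t]
  · set r := min δ ((A / B) ^ (1 / (s - t)) / 2) with hr_def
    have hABpos : 0 < (A / B) ^ (1 / (s - t)) := Real.rpow_pos_of_pos (div_pos hA hB0) _
    have hrpos : 0 < r := lt_min hδ (by positivity)
    have h1 := h r hrpos (min_le_left _ _)
    have hst : 0 < s - t := sub_pos.2 hts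
    have hrlt : r < (A / B) ^ (1 / (s - t)) :=
      lt_of_le_of_lt (min_le_right _ _) (by linarith)
    have h2 : r ^ (s - t) < A / B := by
      have := Real.rpow_lt_rpow hrpos.le hrlt hst
      rwa [← Real.rpow_mul (div_pos hA hB0).le, one_div,
        inv_mul_cancel₀ (ne_of_gt hst), Real.rpow_one] at this
    have h3 : r ^ s = r ^ (s - t) * r ^ t := by
      rw [← Real.rpow_add hrpos]; ring_nf
    have hrt : 0 < r ^ t := Real.rpow_pos_of_pos hrpos t
    rw [h3] at h1
    have h4 : B * (r ^ (s - t) * r ^ t) < B * ((A / B) * r ^ t) := by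
      apply mul_lt_mul_of_pos_left _ hB0
      exact mul_lt_mul_of_pos_right h2 hrt
    have h5 : B * (A / B * r ^ t) = A * r ^ t := by
      field_simp
    nlinarith

/-- From the `TpAt1` inequality, a clean integral bound. -/
lemma J_bound {p β C r : ℝ} {X : ℝ → ℝ} {P : Polynomial ℝ} (hp : 1 ≤ p) (hC : 0 < C)
    (hr : 0 < r)
    (hineq : ((1 / (2 * r)) * ∫ u in Ioo (0 - r) (0 + r), |X u - P.eval u| ^ p) ^ (1 / p)
        ≤ C * r ^ β) :
    (∫ u in Ioo (-r) r, |X u - P.eval u| ^ p) ≤ 2 * C ^ p * r ^ (β * p + 1) := by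
  have hp0 : (0:ℝ) < p := lt_of_lt_of_le one_pos hp
  rw [zero_sub, zero_add] at hineq
  set J := ∫ u in Ioo (-r) r, |X u - P.eval u| ^ p with hJ_def
  have hJ0 : 0 ≤ J := integral_nonneg fun u => Real.rpow_nonneg (abs_nonneg _) p
  have hbase : 0 ≤ (1 / (2 * r)) * J := by positivity
  have h1 := Real.rpow_le_rpow (Real.rpow_nonneg hbase _) hineq hp0.le
  rw [← Real.rpow_mul hbase, one_div_mul_cancel (ne_of_gt hp0), Real.rpow_one] at h1
  rw [Real.mul_rpow hC.le (Real.rpow_nonneg hr.le β), ← Real.rpow_mul hr.le] at h1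
  -- h1 : (1/(2r)) * J ≤ C^p * r^(β*p)
  have h2 : J ≤ 2 * r * (C ^ p * r ^ (β * p)) := by
    have hr' : (0:ℝ) < 2 * r := by linarith
    calc J = 2 * r * ((1/(2*r)) * J) := by field_simp
      _ ≤ 2 * r * (C ^ p * r ^ (β * p)) := mul_le_mul_of_nonneg_left h1 hr'.le
  refine h2.trans (le_of_eq ?_)
  rw [Real.rpow_add hr, Real.rpow_one]
  ring



lemma member {p a α r0 : ℝ} {X : ℝ → ℝ} (hp : 1 ≤ p) (ha : 1 < a) (hr0 : 0 < r0)
    (hX : MemLp X (ENNReal.ofReal p) (volume.restrict (Ioo (-r0) r0)))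
    (hss : ∀ᵐ x : ℝ, a ^ α * X x = X (a * x))
    (hpoly : ¬ ∃ (P : Polynomial ℝ) (δ : ℝ), 0 < δ ∧ ∀ᵐ x : ℝ, |x| < δ → X x = P.eval x) :
    TpAt1 p X 0 α := by
  have hp0 : (0:ℝ) < p := lt_of_lt_of_le one_pos hp
  obtain ⟨c1, c2, hc1, hc2, hbd⟩ := Ig_bounds hp0 ha hr0 hX hss hpoly
  refine ⟨(c2 / 2) ^ (1 / p), Real.rpow_pos_of_pos (by positivity) _, 0, Or.inl rfl, r0, hr0,
    fun r hr hrlt => ?_⟩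
  simp only [Polynomial.eval_zero, sub_zero, zero_sub, zero_add]
  have hub := (hbd r hr hrlt.le).2
  have hb2 : (1 / (2 * r)) * (∫ u in Ioo (-r) r, |X u| ^ p) ≤ (c2/2) * r ^ (α * p) := by
    have h1 : (1 / (2 * r)) * (∫ u in Ioo (-r) r, |X u| ^ p)
        ≤ (1 / (2 * r)) * (c2 * r ^ (1 + α * p)) :=
      mul_le_mul_of_nonneg_left hub (by positivity)
    refine h1.trans (le_of_eq ?_)
    rw [Real.rpow_add hr, Real.rpow_one]
    field_simp
  have h3 := Real.rpow_le_rpow (by positivity) hb2 (by positivity : (0:ℝ) ≤ 1/p)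
  refine h3.trans (le_of_eq ?_)
  rw [Real.mul_rpow (by positivity) (Real.rpow_nonneg hr.le _), ← Real.rpow_mul hr.le]
  congr 1
  field_simp

lemma main_contra {p a α β r0 C a0 : ℝ} {X : ℝ → ℝ} (P Q : Polynomial ℝ)
    (hp : 1 ≤ p) (ha : 1 < a) (hr0 : 0 < r0) (hC : 0 < C) (ha0 : 0 < a0) (hβ : α < β)
    (hX : MemLp X (ENNReal.ofReal p) (volume.restrict (Ioo (-r0) r0)))
    (hss : ∀ᵐ x : ℝ, a ^ α * X x = X (a * x))
    (hpoly : ¬ ∃ (P' : Polynomial ℝ) (δ : ℝ), 0 < δ ∧ ∀ᵐ x : ℝ, |x| < δ → X x = P'.eval x)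
    (hQss : ∀ x : ℝ, Q.eval (a * x) = a ^ α * Q.eval x)
    (hRα : P - Q ≠ 0 → ((P - Q).natTrailingDegree : ℝ) ≠ α)
    (hT : ∀ r : ℝ, 0 < r → r < a0 →
      ((1 / (2 * r)) * ∫ u in Ioo (0 - r) (0 + r), |X u - P.eval u| ^ p) ^ (1 / p)
        ≤ C * r ^ β) : False := by
  have hp0 : (0:ℝ) < p := lt_of_lt_of_le one_pos hp
  set Y : ℝ → ℝ := fun x => X x - Q.eval x with hY_def
  have hYmem : MemLp Y (ENNReal.ofReal p) (volume.restrict (Ioo (-r0) r0)) :=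
    hX.sub (poly_memLp _ Q r0)
  have hYss : ∀ᵐ x : ℝ, a ^ α * Y x = Y (a * x) := by
    filter_upwards [hss] with x hx
    simp only [hY_def]
    rw [mul_sub, hx, hQss x]
  have hYpoly : ¬ ∃ (P' : Polynomial ℝ) (δ : ℝ), 0 < δ ∧
      ∀ᵐ x : ℝ, |x| < δ → Y x = P'.eval x := by
    rintro ⟨P', δ, hδ, hae⟩
    refine hpoly ⟨P' + Q, δ, hδ, ?_⟩
    filter_upwards [hae] with x hx hxδ
    rw [Polynomial.eval_add, ← hx hxδ, hY_def]
    ring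
  obtain ⟨c1, c2, hc1, hc2, hbd⟩ := Ig_bounds hp0 ha hr0 hYmem hYss hYpoly
  set R : Polynomial ℝ := P - Q with hR_def
  have hXPmem : MemLp (fun x => X x - P.eval x) (ENNReal.ofReal p)
      (volume.restrict (Ioo (-r0) r0)) := hX.sub (poly_memLp _ P r0)
  have hJint : ∀ r : ℝ, r ≤ r0 →
      IntegrableOn (fun u => |X u - P.eval u| ^ p) (Ioo (-r) r) := by
    intro r hr
    have := intOn hp0 hXPmem hr
    simpa using this
  have hYint : ∀ r : ℝ, r ≤ r0 → IntegrableOn (fun u => |Y u| ^ p) (Ioo (-r) r) :=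
    fun r hr => intOn hp0 hYmem hr
  have hJ : ∀ r : ℝ, 0 < r → r < a0 →
      (∫ u in Ioo (-r) r, |X u - P.eval u| ^ p) ≤ 2 * C ^ p * r ^ (β * p + 1) :=
    fun r hr hra0 => J_bound hp hC hr (hT r hr hra0)
  have hYdecomp : ∀ u : ℝ, Y u = (X u - P.eval u) + R.eval u := by
    intro u
    simp only [hY_def, hR_def, Polynomial.eval_sub]
    ring
  have hexp1 : 1 + α * p < β * p + 1 := by nlinarith
  rcases eq_or_ne R 0 with hR0 | hRne
  · -- R = 0 : J = I_Y
    have hid : ∀ u : ℝ, Y u = X u - P.eval u := by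
      intro u; rw [hYdecomp u, hR0]; simp
    refine no_gap hc1 (by positivity : (0:ℝ) ≤ 2 * C ^ p) hexp1
      (lt_min hr0 (by positivity : (0:ℝ) < a0/2)) (fun r hr hrδ => ?_)
    have hr1 : r ≤ r0 := le_trans hrδ (min_le_left _ _)
    have hr2 : r < a0 := lt_of_le_of_lt (le_trans hrδ (min_le_right _ _)) (by linarith)
    calc c1 * r ^ (1 + α * p) ≤ ∫ u in Ioo (-r) r, |Y u| ^ p := (hbd r hr hr1).1
      _ = ∫ u in Ioo (-r) r, |X u - P.eval u| ^ p := by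
          apply setIntegral_congr_ae measurableSet_Ioo
          exact ae_of_all _ fun u _ => by rw [hid u]
      _ ≤ 2 * C ^ p * r ^ (β * p + 1) := hJ r hr hr2
  · have hmα := hRα hRne
    set m := R.natTrailingDegree with hm_def
    obtain ⟨CR, hCR, hup⟩ := poly_upper p hp R
    obtain ⟨cR, δR, hcR, hδR, hlow⟩ := poly_lower p hp R hRne
    rcases lt_or_gt_of_ne hmα with hlt | hgt
    · -- m < α : R dominates
      have hexp2 : (m:ℝ) * p + 1 < min (β * p + 1) (1 + α * p) :=
        lt_min (by nlinarith) (by nlinarith)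
      refine no_gap hcR (by positivity : (0:ℝ) ≤ 2 ^ (p-1) * (2 * C ^ p + c2)) hexp2
        (lt_min (lt_min hr0 one_pos) (lt_min (by positivity : (0:ℝ) < a0/2) hδR))
        (fun r hr hrδ => ?_)
      have hr1 : r ≤ r0 := le_trans hrδ (le_trans (min_le_left _ _) (min_le_left _ _))
      have hrone : r ≤ 1 := le_trans hrδ (le_trans (min_le_left _ _) (min_le_right _ _))
      have hr2 : r < a0 := lt_of_le_of_lt
        (le_trans hrδ (le_trans (min_le_right _ _) (min_le_left _ _))) (by linarith)
      have hr3 : r ≤ δR := le_trans hrδ (le_trans (min_le_right _ _) (min_le_right _ _))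
      have hptw : ∀ u ∈ Ioo (-r) r, |R.eval u| ^ p
          ≤ 2 ^ (p-1) * (|X u - P.eval u| ^ p + |Y u| ^ p) := by
        intro u _
        have h1 : |R.eval u| ≤ |X u - P.eval u| + |Y u| := by
          have : R.eval u = Y u - (X u - P.eval u) := by rw [hYdecomp u]; ring
          rw [this]
          calc |Y u - (X u - P.eval u)| ≤ |Y u| + |X u - P.eval u| := abs_sub _ _
            _ = |X u - P.eval u| + |Y u| := by ring
        calc |R.eval u| ^ p ≤ (|X u - P.eval u| + |Y u|) ^ p :=
              Real.rpow_le_rpow (abs_nonneg _) h1 hp0.le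
          _ ≤ 2 ^ (p-1) * (|X u - P.eval u| ^ p + |Y u| ^ p) :=
              add_rpow_le hp (abs_nonneg _) (abs_nonneg _)
      have hint2 : IntegrableOn
          (fun u => 2 ^ (p-1) * (|X u - P.eval u| ^ p + |Y u| ^ p)) (Ioo (-r) r) :=
        ((hJint r hr1).add (hYint r hr1)).const_mul _
      have hmono := setIntegral_mono_on (poly_int_continuous p hp0.le R (-r) r)
        hint2 measurableSet_Ioo hptw
      rw [integral_const_mul, integral_add (hJint r hr1) (hYint r hr1)] at hmono
      calc cR * r ^ ((m:ℝ) * p + 1) ≤ ∫ u in Ioo (-r) r, |R.eval u| ^ p := hlow r hr hr3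
        _ ≤ 2 ^ (p-1) * ((∫ u in Ioo (-r) r, |X u - P.eval u| ^ p)
              + ∫ u in Ioo (-r) r, |Y u| ^ p) := hmono
        _ ≤ 2 ^ (p-1) * (2 * C ^ p * r ^ (β * p + 1) + c2 * r ^ (1 + α * p)) := by
            have := hJ r hr hr2
            have := (hbd r hr hr1).2
            apply mul_le_mul_of_nonneg_left _ (by positivity : (0:ℝ) ≤ 2 ^ (p-1))
            linarith
        _ ≤ 2 ^ (p-1) * (2 * C ^ p + c2) * r ^ (min (β * p + 1) (1 + α * p)) := by
            have hb1 : r ^ (β * p + 1) ≤ r ^ (min (β * p + 1) (1 + α * p)) :=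
              Real.rpow_le_rpow_of_exponent_ge hr hrone (min_le_left _ _)
            have hb2 : r ^ (1 + α * p) ≤ r ^ (min (β * p + 1) (1 + α * p)) :=
              Real.rpow_le_rpow_of_exponent_ge hr hrone (min_le_right _ _)
            have h2p : (0:ℝ) ≤ 2 ^ (p-1) := by positivity
            have hb1' : 2 * C ^ p * r ^ (β * p + 1)
                ≤ 2 * C ^ p * r ^ (min (β * p + 1) (1 + α * p)) :=
              mul_le_mul_of_nonneg_left hb1 (by positivity)
            have hb2' : c2 * r ^ (1 + α * p)
                ≤ c2 * r ^ (min (β * p + 1) (1 + α * p)) :=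
              mul_le_mul_of_nonneg_left hb2 hc2.le
            calc 2 ^ (p-1) * (2 * C ^ p * r ^ (β * p + 1) + c2 * r ^ (1 + α * p))
                ≤ 2 ^ (p-1) * (2 * C ^ p * r ^ (min (β * p + 1) (1 + α * p))
                    + c2 * r ^ (min (β * p + 1) (1 + α * p))) :=
                  mul_le_mul_of_nonneg_left (by linarith) h2p
              _ = 2 ^ (p-1) * (2 * C ^ p + c2) * r ^ (min (β * p + 1) (1 + α * p)) := by
                  ring
    · -- α < m : Y dominates
      have hexp2 : 1 + α * p < min (β * p + 1) ((m:ℝ) * p + 1) :=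
        lt_min (by nlinarith) (by nlinarith)
      refine no_gap hc1 (by positivity : (0:ℝ) ≤ 2 ^ (p-1) * (2 * C ^ p + CR)) hexp2
        (lt_min (lt_min hr0 one_pos) (by positivity : (0:ℝ) < a0/2))
        (fun r hr hrδ => ?_)
      have hr1 : r ≤ r0 := le_trans hrδ (le_trans (min_le_left _ _) (min_le_left _ _))
      have hrone : r ≤ 1 := le_trans hrδ (le_trans (min_le_left _ _) (min_le_right _ _))
      have hr2 : r < a0 := lt_of_le_of_lt (le_trans hrδ (min_le_right _ _)) (by linarith)
      have hptw : ∀ u ∈ Ioo (-r) r, |Y u| ^ p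
          ≤ 2 ^ (p-1) * (|X u - P.eval u| ^ p + |R.eval u| ^ p) := by
        intro u _
        have h1 : |Y u| ≤ |X u - P.eval u| + |R.eval u| := by
          rw [hYdecomp u]
          exact abs_add_le _ _
        calc |Y u| ^ p ≤ (|X u - P.eval u| + |R.eval u|) ^ p :=
              Real.rpow_le_rpow (abs_nonneg _) h1 hp0.le
          _ ≤ 2 ^ (p-1) * (|X u - P.eval u| ^ p + |R.eval u| ^ p) :=
              add_rpow_le hp (abs_nonneg _) (abs_nonneg _)
      have hint2 : IntegrableOn
          (fun u => 2 ^ (p-1) * (|X u - P.eval u| ^ p + |R.eval u| ^ p)) (Ioo (-r) r) :=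
        ((hJint r hr1).add (poly_int_continuous p hp0.le R (-r) r)).const_mul _
      have hmono := setIntegral_mono_on (hYint r hr1) hint2 measurableSet_Ioo hptw
      rw [integral_const_mul,
        integral_add (hJint r hr1) (poly_int_continuous p hp0.le R (-r) r)] at hmono
      calc c1 * r ^ (1 + α * p) ≤ ∫ u in Ioo (-r) r, |Y u| ^ p := (hbd r hr hr1).1
        _ ≤ 2 ^ (p-1) * ((∫ u in Ioo (-r) r, |X u - P.eval u| ^ p)
              + ∫ u in Ioo (-r) r, |R.eval u| ^ p) := hmono
        _ ≤ 2 ^ (p-1) * (2 * C ^ p * r ^ (β * p + 1) + CR * r ^ ((m:ℝ) * p + 1)) := by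
            have := hJ r hr hr2
            have := hup r hr hrone
            apply mul_le_mul_of_nonneg_left _ (by positivity : (0:ℝ) ≤ 2 ^ (p-1))
            linarith
        _ ≤ 2 ^ (p-1) * (2 * C ^ p + CR) * r ^ (min (β * p + 1) ((m:ℝ) * p + 1)) := by
            have hb1 : r ^ (β * p + 1) ≤ r ^ (min (β * p + 1) ((m:ℝ) * p + 1)) :=
              Real.rpow_le_rpow_of_exponent_ge hr hrone (min_le_left _ _)
            have hb2 : r ^ ((m:ℝ) * p + 1) ≤ r ^ (min (β * p + 1) ((m:ℝ) * p + 1)) :=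
              Real.rpow_le_rpow_of_exponent_ge hr hrone (min_le_right _ _)
            have h2p : (0:ℝ) ≤ 2 ^ (p-1) := by positivity
            have hb1' : 2 * C ^ p * r ^ (β * p + 1)
                ≤ 2 * C ^ p * r ^ (min (β * p + 1) ((m:ℝ) * p + 1)) :=
              mul_le_mul_of_nonneg_left hb1 (by positivity)
            have hb2' : CR * r ^ ((m:ℝ) * p + 1)
                ≤ CR * r ^ (min (β * p + 1) ((m:ℝ) * p + 1)) :=
              mul_le_mul_of_nonneg_left hb2 hCR
            calc 2 ^ (p-1) * (2 * C ^ p * r ^ (β * p + 1) + CR * r ^ ((m:ℝ) * p + 1))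
                ≤ 2 ^ (p-1) * (2 * C ^ p * r ^ (min (β * p + 1) ((m:ℝ) * p + 1))
                    + CR * r ^ (min (β * p + 1) ((m:ℝ) * p + 1))) :=
                  mul_le_mul_of_nonneg_left (by linarith) h2p
              _ = 2 ^ (p-1) * (2 * C ^ p + CR) * r ^ (min (β * p + 1) ((m:ℝ) * p + 1)) := by
                  ring



lemma converse {p a α β r0 : ℝ} {X : ℝ → ℝ} (hp : 1 ≤ p) (ha : 1 < a) (hr0 : 0 < r0)
    (hX : MemLp X (ENNReal.ofReal p) (volume.restrict (Ioo (-r0) r0)))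
    (hss : ∀ᵐ x : ℝ, a ^ α * X x = X (a * x))
    (hpoly : ¬ ∃ (P : Polynomial ℝ) (δ : ℝ), 0 < δ ∧ ∀ᵐ x : ℝ, |x| < δ → X x = P.eval x)
    (hT : TpAt1 p X 0 β) : β ≤ α := by
  by_contra hβα
  push_neg at hβα
  obtain ⟨C, hC, P, _, a0, ha0, hT⟩ := hT
  by_cases hnat : ∃ k : ℕ, (k : ℝ) = α
  · obtain ⟨k, hk⟩ := hnat
    set Q : Polynomial ℝ := Polynomial.C (P.coeff k) * Polynomial.X ^ k with hQ_def
    refine main_contra P Q hp ha hr0 hC ha0 hβα hX hss hpoly ?_ ?_ hT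
    · intro x
      simp only [hQ_def, Polynomial.eval_mul, Polynomial.eval_C, Polynomial.eval_pow,
        Polynomial.eval_X]
      rw [← hk, Real.rpow_natCast, mul_pow]
      ring
    · intro hne heq
      have hmk : (P - Q).natTrailingDegree = k := by
        have : ((P - Q).natTrailingDegree : ℝ) = (k : ℝ) := heq.trans hk.symm
        exact_mod_cast this
      have hcoeff : (P - Q).coeff k = 0 := by
        simp [hQ_def, Polynomial.coeff_X_pow]
      have htc : (P - Q).trailingCoeff = 0 := by
        rw [Polynomial.trailingCoeff, hmk, hcoeff]
      exact hne (Polynomial.trailingCoeff_eq_zero.1 htc)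
  · refine main_contra P 0 hp ha hr0 hC ha0 hβα hX hss hpoly ?_ ?_ (by simpa using hT)
    · intro x; simp
    · intro _ heq
      exact hnat ⟨(P - 0).natTrailingDegree, heq⟩

end Stmt13
end Stmt13Aux

/-- if `X ∈ L^p` near `0` is self-similar at `0` with scaling ratio `a > 1`
and exponent `α`, and does not coincide a.e. with a polynomial on any neighborhood of
`0`, then `α > -1/p` and the `p`-exponent of `X` at `0` is `α`. -/
theorem stmt13 (p a α : ℝ) (hp : 1 ≤ p) (ha : 1 < a) (X : ℝ → ℝ)
    (hX : ∃ r : ℝ, 0 < r ∧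
      MemLp X (ENNReal.ofReal p) (volume.restrict (Set.Ioo (-r) r)))
    (hss : ∀ᵐ x : ℝ, a ^ α * X x = X (a * x))
    (hpoly : ¬ ∃ (P : Polynomial ℝ) (δ : ℝ), 0 < δ ∧
      ∀ᵐ x : ℝ, |x| < δ → X x = P.eval x) :
    -1 / p < α ∧ pExponent1 p X 0 = (α : EReal) := by
  obtain ⟨r0, hr0, hXm⟩ := hX
  have hp0 : (0:ℝ) < p := lt_of_lt_of_le one_pos hp
  have hs : 0 < 1 + α * p := Stmt13.exp_pos hp0 ha hr0 hXm hss hpoly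
  constructor
  · rw [div_lt_iff₀ hp0]
    nlinarith
  · simp only [pExponent1]
    apply le_antisymm
    · apply sSup_le
      rintro x ⟨β, hβ, rfl⟩
      exact EReal.coe_le_coe_iff.2 (Stmt13.converse hp ha hr0 hXm hss hpoly hβ)
    · exact le_sSup ⟨α, Stmt13.member hp ha hr0 hXm hss hpoly, rfl⟩
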